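/- Let F be a field and let m, n, r, d be integers with m, n ≥ 2, d ≥ 1 and 0 < r < min{m,n}. Then the set of all P ∈ F[λ]^{m×n} with deg(P) ≤ d and normal rank rank(P) ≤ r is equal to the set { L R : L ∈ F[λ]^{m×r}, R ∈ F[λ]^{r×n}, deg(L_{*i}) ≤ d, deg(R_{i*}) ≤ d, and deg(L_{*i}) + deg(R_{i*}) ≤ d for i = 1,…,r }. -/

import Mathlib

open Polynomial Matrix

noncomputable section

variable {F : Type*} [Field F]

/-- The matrix over the field of rational functions associated with a polynomial matrix. -/
def toRat {m n : ℕ} (P : Matrix (Fin m) (Fin n) F[X]) : Matrix (Fin m) (Fin n) (RatFunc F) :=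
  P.map (algebraMap F[X] (RatFunc F))

/-- The normal rank of a polynomial matrix: its rank over the field of rational functions. -/
def normalRank {m n : ℕ} (P : Matrix (Fin m) (Fin n) F[X]) : ℕ := (toRat P).rank

/-- The degree of a polynomial matrix: the maximum of the degrees of its entries,
`⊥` (i.e. -∞) for the zero matrix. -/
def matDeg {m n : ℕ} (P : Matrix (Fin m) (Fin n) F[X]) : WithBot ℕ :=
  Finset.univ.sup fun i : Fin m => Finset.univ.sup fun j : Fin n => (P i j).degree

/-- Degree of the i-th row. -/
def rowDeg {m n : ℕ} (P : Matrix (Fin m) (Fin n) F[X]) (i : Fin m) : WithBot ℕ :=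
  Finset.univ.sup fun j : Fin n => (P i j).degree

/-- Degree of the j-th column. -/
def colDeg {m n : ℕ} (P : Matrix (Fin m) (Fin n) F[X]) (j : Fin n) : WithBot ℕ :=
  Finset.univ.sup fun i : Fin m => (P i j).degree

/-- Degree of the i-th row as a natural number (0 for a zero row). -/
def rowDegNat {m n : ℕ} (P : Matrix (Fin m) (Fin n) F[X]) (i : Fin m) : ℕ :=
  Finset.univ.sup fun j : Fin n => (P i j).natDegree

/-- Degree of the j-th column as a natural number (0 for a zero column). -/
def colDegNat {m n : ℕ} (P : Matrix (Fin m) (Fin n) F[X]) (j : Fin n) : ℕ :=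
  Finset.univ.sup fun i : Fin m => (P i j).natDegree

/-- Highest-row-degree coefficient matrix. -/
def hrMatrix {m n : ℕ} (P : Matrix (Fin m) (Fin n) F[X]) : Matrix (Fin m) (Fin n) F :=
  Matrix.of fun i j => (P i j).coeff (rowDegNat P i)

/-- Highest-column-degree coefficient matrix. -/
def hcMatrix {m n : ℕ} (P : Matrix (Fin m) (Fin n) F[X]) : Matrix (Fin m) (Fin n) F :=
  Matrix.of fun i j => (P i j).coeff (colDegNat P j)

/-- A polynomial matrix is row reduced if its highest-row-degree coefficient matrix has
full row rank. -/
def RowReduced {m n : ℕ} (P : Matrix (Fin m) (Fin n) F[X]) : Prop := (hrMatrix P).rank = m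

/-- A polynomial matrix is column reduced if its highest-column-degree coefficient matrix has
full column rank. -/
def ColReduced {m n : ℕ} (P : Matrix (Fin m) (Fin n) F[X]) : Prop := (hcMatrix P).rank = n

/-- Evaluation of a polynomial matrix at a point of the algebraic closure. -/
def evalMat {m n : ℕ} (P : Matrix (Fin m) (Fin n) F[X]) (x : AlgebraicClosure F) :
    Matrix (Fin m) (Fin n) (AlgebraicClosure F) :=
  Matrix.of fun i j => aeval x (P i j)

/-- The rows of `P` form a minimal basis of the rational subspace they span (Forney's
characterization): full row rank at every point of the algebraic closure, and row reduced. -/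
def IsMinimalRowBasis {m n : ℕ} (P : Matrix (Fin m) (Fin n) F[X]) : Prop :=
  (∀ x : AlgebraicClosure F, (evalMat P x).rank = m) ∧ RowReduced P

/-- The columns of `P` form a minimal basis of the rational subspace they span. -/
def IsMinimalColBasis {m n : ℕ} (P : Matrix (Fin m) (Fin n) F[X]) : Prop :=
  (∀ x : AlgebraicClosure F, (evalMat P x).rank = n) ∧ ColReduced P

/-- The column space Col(P) over the field of rational functions. -/
def colSpace {m n : ℕ} (P : Matrix (Fin m) (Fin n) F[X]) :
    Submodule (RatFunc F) (Fin m → RatFunc F) :=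
  LinearMap.range (toRat P).mulVecLin

/-- The row space Row(P) over the field of rational functions. -/
def rowSpace {m n : ℕ} (P : Matrix (Fin m) (Fin n) F[X]) :
    Submodule (RatFunc F) (Fin n → RatFunc F) :=
  LinearMap.range (toRat P)ᵀ.mulVecLin

/-- The right nullspace N_r(P). -/
def rightNull {m n : ℕ} (P : Matrix (Fin m) (Fin n) F[X]) :
    Submodule (RatFunc F) (Fin n → RatFunc F) :=
  LinearMap.ker (toRat P).mulVecLin

/-- The left nullspace N_ℓ(P). -/
def leftNull {m n : ℕ} (P : Matrix (Fin m) (Fin n) F[X]) :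
    Submodule (RatFunc F) (Fin m → RatFunc F) :=
  LinearMap.ker (toRat P)ᵀ.mulVecLin

/-! ### Auxiliary lemmas for the factorization theorem -/

section Auxiliary

variable {F : Type*} [Field F]

lemma aux_coeff_mul_of_natDegree_le {p q : F[X]} {k : ℕ} (hk : q.natDegree ≤ k) :
    (p * q).coeff (p.natDegree + k) = p.leadingCoeff * q.coeff k := by
  rw [Polynomial.coeff_mul, Finset.sum_eq_single (p.natDegree, k)]
  · rfl
  · rintro ⟨a, b⟩ hab hne
    rw [Finset.HasAntidiagonal.mem_antidiagonal] at hab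
    rcases lt_or_ge p.natDegree a with h | h
    · simp [Polynomial.coeff_eq_zero_of_natDegree_lt h]
    · rcases lt_or_eq_of_le h with h' | h'
      · have hb : q.natDegree < b := by omega
        simp [Polynomial.coeff_eq_zero_of_natDegree_lt hb]
      · exfalso
        apply hne
        have hb : b = k := by omega
        rw [← h', hb]
  · intro h
    exact absurd (by simp : (p.natDegree, k) ∈ Finset.HasAntidiagonal.antidiagonal (p.natDegree + k)) h

lemma aux_degree_entry_le {m n d : ℕ} {P : Matrix (Fin m) (Fin n) F[X]}
    (h : matDeg P ≤ (d : WithBot ℕ)) (i : Fin m) (j : Fin n) : (P i j).degree ≤ (d : WithBot ℕ) := by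
  calc (P i j).degree ≤ Finset.univ.sup (fun j => (P i j).degree) :=
        Finset.le_sup (f := fun j => (P i j).degree) (Finset.mem_univ j)
    _ ≤ matDeg P :=
        Finset.le_sup (f := fun i => Finset.univ.sup fun j => (P i j).degree) (Finset.mem_univ i)
    _ ≤ (d : WithBot ℕ) := h

/-- The nonzero rows of `Q` have linearly independent leading coefficient rows. -/
def RedRows {m n : ℕ} (Q : Matrix (Fin m) (Fin n) F[X]) : Prop :=
  ∀ c : Fin m → F, (∀ i, c i ≠ 0 → Q i ≠ 0) →
    (∀ j, ∑ i, c i * hrMatrix Q i j = 0) → c = 0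

/-- Predictable degree property. -/
lemma aux_predDeg {m n : ℕ} {Q : Matrix (Fin m) (Fin n) F[X]} (hQ : RedRows Q)
    (v : Fin m → F[X]) (hv : ∀ i, v i ≠ 0 → Q i ≠ 0)
    {b : Fin m} (hb : v b ≠ 0) :
    ∃ j, (∑ i, v i * Q i j) ≠ 0 ∧
      (v b).natDegree + rowDegNat Q b ≤ (∑ i, v i * Q i j).natDegree := by
  classical
  set S := Finset.univ.filter fun i => v i ≠ 0 with hS
  have hbS : b ∈ S := Finset.mem_filter.mpr ⟨Finset.mem_univ b, hb⟩
  set δ := S.sup fun i => (v i).natDegree + rowDegNat Q i with hδ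
  set c : Fin m → F := fun i =>
    if v i ≠ 0 ∧ (v i).natDegree + rowDegNat Q i = δ then (v i).leadingCoeff else 0 with hc
  have hcsupp : ∀ i, c i ≠ 0 → Q i ≠ 0 := by
    intro i hi
    apply hv
    by_contra h0
    simp [hc, h0] at hi
  have hcne : c ≠ 0 := by
    obtain ⟨i1, hi1S, hi1⟩ := S.exists_mem_eq_sup ⟨b, hbS⟩
      (fun i => (v i).natDegree + rowDegNat Q i)
    have hv1 : v i1 ≠ 0 := (Finset.mem_filter.mp hi1S).2
    intro h0
    have hci1 : c i1 = 0 := congrFun h0 i1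
    rw [hc] at hci1
    simp only [hv1, hi1.symm, ne_eq, not_false_eq_true, and_self, if_true] at hci1
    split_ifs at hci1 with hcond
    · exact hv1 (Polynomial.leadingCoeff_eq_zero.mp hci1)
    · exact hcond ⟨trivial, rfl⟩
  have key : ∀ j, (∑ i, v i * Q i j).coeff δ = ∑ i, c i * hrMatrix Q i j := by
    intro j
    rw [Polynomial.finset_sum_coeff]
    apply Finset.sum_congr rfl
    intro i _
    by_cases h0 : v i = 0
    · simp [h0, hc]
    by_cases h1 : (v i).natDegree + rowDegNat Q i = δ
    · have hk : (Q i j).natDegree ≤ rowDegNat Q i :=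
        Finset.le_sup (f := fun j => (Q i j).natDegree) (Finset.mem_univ j)
      rw [← h1, aux_coeff_mul_of_natDegree_le hk]
      simp [hc, h0, h1, hrMatrix]
    · have hiS : i ∈ S := Finset.mem_filter.mpr ⟨Finset.mem_univ i, h0⟩
      have hle : (v i).natDegree + rowDegNat Q i ≤ δ :=
        Finset.le_sup (f := fun i => (v i).natDegree + rowDegNat Q i) hiS
      have hlt : (v i * Q i j).natDegree < δ := by
        have h2 : (Q i j).natDegree ≤ rowDegNat Q i :=
          Finset.le_sup (f := fun j => (Q i j).natDegree) (Finset.mem_univ j)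
        have := Polynomial.natDegree_mul_le (p := v i) (q := Q i j)
        omega
      rw [Polynomial.coeff_eq_zero_of_natDegree_lt hlt]
      simp [hc, h1]
  have hnot : ¬ ∀ j, ∑ i, c i * hrMatrix Q i j = 0 := fun h => hcne (hQ c hcsupp h)
  push_neg at hnot
  obtain ⟨j, hj⟩ := hnot
  rw [← key j] at hj
  refine ⟨j, fun h0 => hj (by rw [h0]; simp), ?_⟩
  exact le_trans (Finset.le_sup (f := fun i => (v i).natDegree + rowDegNat Q i) hbS)
    (Polynomial.le_natDegree_of_ne_zero hj)

open Classical in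
/-- Termination measure for row reduction. -/
noncomputable def mes {m n : ℕ} (Q : Matrix (Fin m) (Fin n) F[X]) : ℕ :=
  ∑ i, if Q i = 0 then 0 else rowDegNat Q i + 1

/-- Row reduction: every polynomial matrix can be written as a unimodular matrix times a
matrix with `RedRows`. -/
lemma aux_exists_redRows {m n : ℕ} (N : ℕ) :
    ∀ Q : Matrix (Fin m) (Fin n) F[X], mes Q < N →
    ∃ (E E' : Matrix (Fin m) (Fin m) F[X]) (Q' : Matrix (Fin m) (Fin n) F[X]),
      E * E' = 1 ∧ E' * E = 1 ∧ Q = E * Q' ∧ RedRows Q' := by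
  classical
  induction N with
  | zero => intro Q h; omega
  | succ N ih =>
    intro Q hQN
    by_cases hrr : RedRows Q
    · exact ⟨1, 1, Q, one_mul 1, one_mul 1, (Matrix.one_mul Q).symm, hrr⟩
    unfold RedRows at hrr
    push_neg at hrr
    obtain ⟨c, hcsupp, hcker, hcne⟩ := hrr
    obtain ⟨i1, hi1⟩ := Function.ne_iff.mp hcne
    have hi1' : c i1 ≠ 0 := hi1
    set S := Finset.univ.filter fun i => c i ≠ 0 with hSdef
    have hi1S : i1 ∈ S := Finset.mem_filter.mpr ⟨Finset.mem_univ i1, hi1'⟩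
    obtain ⟨i0, hi0S, hmax⟩ := S.exists_max_image (fun i => rowDegNat Q i) ⟨i1, hi1S⟩
    have hci0 : c i0 ≠ 0 := (Finset.mem_filter.mp hi0S).2
    set μ : Fin m → ℕ := fun i => rowDegNat Q i with hμdef
    set c' : Fin m → F := fun i => (c i0)⁻¹ * c i with hc'def
    have hc'i0 : c' i0 = 1 := inv_mul_cancel₀ hci0
    have hc'c : ∀ i, c' i ≠ 0 → c i ≠ 0 := by
      intro i hi h0
      apply hi
      simp [hc'def, h0]
    have hc'ker : ∀ j, ∑ i, c' i * hrMatrix Q i j = 0 := by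
      intro j
      have : ∑ i, c' i * hrMatrix Q i j = (c i0)⁻¹ * ∑ i, c i * hrMatrix Q i j := by
        rw [Finset.mul_sum]
        apply Finset.sum_congr rfl
        intro i _
        rw [hc'def, mul_assoc]
      rw [this, hcker j, mul_zero]
    set u : Matrix (Fin m) (Fin m) F[X] := Matrix.of fun i j =>
      if i = i0 ∧ j ≠ i0 then Polynomial.C (c' j) * Polynomial.X ^ (μ i0 - μ j) else 0 with hudef
    have huu : u * u = 0 := by
      apply Matrix.ext
      intro i j
      rw [Matrix.mul_apply, Matrix.zero_apply]
      apply Finset.sum_eq_zero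
      intro k _
      by_cases h1 : i = i0 ∧ k ≠ i0
      · have h2 : ¬ (k = i0 ∧ j ≠ i0) := fun h => h1.2 h.1
        simp [hudef, h2]
      · simp [hudef, h1]
    set T : Matrix (Fin m) (Fin m) F[X] := 1 + u with hTdef
    set T' : Matrix (Fin m) (Fin m) F[X] := 1 - u with hT'def
    have hTT' : T * T' = 1 := by
      rw [hTdef, hT'def]
      have : (1 + u) * (1 - u) = 1 - u + (u - u * u) := by
        rw [add_mul, one_mul, mul_sub, mul_one]
      rw [this, huu, sub_zero]
      abel
    have hT'T : T' * T = 1 := by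
      rw [hTdef, hT'def]
      have : (1 - u) * (1 + u) = 1 + u - (u + u * u) := by
        rw [sub_mul, one_mul, mul_add, mul_one]
      rw [this, huu, add_zero]
      abel
    set Q1 := T * Q with hQ1def
    have hrow_other : ∀ i, i ≠ i0 → Q1 i = Q i := by
      intro i hi
      funext j
      rw [hQ1def, hTdef, Matrix.add_mul, Matrix.one_mul]
      show Q i j + (u * Q) i j = Q i j
      have : (u * Q) i j = 0 := by
        rw [Matrix.mul_apply]
        apply Finset.sum_eq_zero
        intro k _
        simp [hudef, hi]
      rw [this, add_zero]
    have hrow_i0 : ∀ j, Q1 i0 j = ∑ k, Polynomial.C (c' k) * Polynomial.X ^ (μ i0 - μ k) * Q k j := by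
      intro j
      have hterm : ∀ k : Fin m, Polynomial.C (c' k) * Polynomial.X ^ (μ i0 - μ k) * Q k j
          = u i0 k * Q k j + if k = i0 then Q i0 j else 0 := by
        intro k
        by_cases hk : k = i0
        · subst hk
          simp [hudef, hc'i0]
        · simp [hudef, hk]
      rw [Finset.sum_congr rfl fun k _ => hterm k, Finset.sum_add_distrib,
        Finset.sum_ite_eq' Finset.univ i0 (fun _ => Q i0 j)]
      simp only [Finset.mem_univ, if_true]
      rw [hQ1def, hTdef, Matrix.add_mul, Matrix.one_mul]
      show Q i0 j + (u * Q) i0 j = (u * Q) i0 j + Q i0 j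
      ring
    have hnew : ∀ j, (Q1 i0 j).natDegree ≤ μ i0 ∧ (Q1 i0 j).coeff (μ i0) = 0 := by
      intro j
      constructor
      · rw [hrow_i0 j]
        apply Polynomial.natDegree_sum_le_of_forall_le
        intro k _
        by_cases hck : c' k = 0
        · simp [hck]
        · have hk : μ k ≤ μ i0 := hmax k (Finset.mem_filter.mpr ⟨Finset.mem_univ k, hc'c k hck⟩)
          have h1 : (Polynomial.C (c' k) * Polynomial.X ^ (μ i0 - μ k) * Q k j).natDegree
              ≤ (Polynomial.C (c' k) * Polynomial.X ^ (μ i0 - μ k)).natDegree + (Q k j).natDegree :=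
            Polynomial.natDegree_mul_le
          have h2 : (Polynomial.C (c' k) * Polynomial.X ^ (μ i0 - μ k)).natDegree ≤ μ i0 - μ k := by
            refine le_trans (Polynomial.natDegree_mul_le) ?_
            simp [Polynomial.natDegree_X_pow]
          have h3 : (Q k j).natDegree ≤ μ k :=
            Finset.le_sup (f := fun j => (Q k j).natDegree) (Finset.mem_univ j)
          omega
      · rw [hrow_i0 j, Polynomial.finset_sum_coeff]
        have hterm : ∀ k : Fin m,
            (Polynomial.C (c' k) * Polynomial.X ^ (μ i0 - μ k) * Q k j).coeff (μ i0)
            = c' k * hrMatrix Q k j := by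
          intro k
          by_cases hck : c' k = 0
          · simp [hck]
          · have hk : μ k ≤ μ i0 := hmax k (Finset.mem_filter.mpr ⟨Finset.mem_univ k, hc'c k hck⟩)
            have hre : Polynomial.C (c' k) * Polynomial.X ^ (μ i0 - μ k) * Q k j
                = Polynomial.C (c' k) * (Q k j * Polynomial.X ^ (μ i0 - μ k)) := by ring
            rw [hre, Polynomial.coeff_C_mul, Polynomial.coeff_mul_X_pow',
              if_pos (Nat.sub_le _ _)]
            have : μ i0 - (μ i0 - μ k) = μ k := by omega
            rw [this]
            rfl
        rw [Finset.sum_congr rfl fun k _ => hterm k]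
        exact hc'ker j
    have hQ1i0 : ∀ j, Q1 i0 j = 0 ∨ (Q1 i0 j).natDegree < μ i0 := by
      intro j
      by_cases h : Q1 i0 j = 0
      · exact Or.inl h
      · right
        rcases lt_or_eq_of_le (hnew j).1 with h' | h'
        · exact h'
        · exfalso
          have h2 := (hnew j).2
          rw [← h', Polynomial.coeff_natDegree] at h2
          exact h (Polynomial.leadingCoeff_eq_zero.mp h2)
    have hQi0ne : Q i0 ≠ 0 := hcsupp i0 hci0
    have hmes : mes Q1 < mes Q := by
      unfold mes
      apply Finset.sum_lt_sum
      · intro i _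
        by_cases hi : i = i0
        · rw [hi, if_neg hQi0ne]
          by_cases h1 : Q1 i0 = 0
          · rw [if_pos h1]; omega
          · rw [if_neg h1]
            have hpos : 0 < μ i0 := by
              obtain ⟨j, hj⟩ := Function.ne_iff.mp h1
              rcases hQ1i0 j with h | h
              · exact absurd h hj
              · omega
            have hlt : rowDegNat Q1 i0 < μ i0 := by
              rw [show rowDegNat Q1 i0 = Finset.univ.sup fun j => (Q1 i0 j).natDegree from rfl]
              rw [Finset.sup_lt_iff (by simpa using hpos)]
              intro j _
              rcases hQ1i0 j with h | h
              · rw [h]; simpa using hpos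
              · exact h
            have hμ0 : μ i0 = rowDegNat Q i0 := rfl
            omega
        · have hre : rowDegNat Q1 i = rowDegNat Q i := by
            apply Finset.sup_congr rfl
            intro j _
            rw [congrFun (hrow_other i hi) j]
          rw [hre, hrow_other i hi]
      · refine ⟨i0, Finset.mem_univ i0, ?_⟩
        rw [if_neg hQi0ne]
        by_cases h1 : Q1 i0 = 0
        · rw [if_pos h1]; omega
        · rw [if_neg h1]
          have hpos : 0 < μ i0 := by
            obtain ⟨j, hj⟩ := Function.ne_iff.mp h1
            rcases hQ1i0 j with h | h
            · exact absurd h hj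
            · omega
          have hlt : rowDegNat Q1 i0 < μ i0 := by
            rw [show rowDegNat Q1 i0 = Finset.univ.sup fun j => (Q1 i0 j).natDegree from rfl]
            rw [Finset.sup_lt_iff (by simpa using hpos)]
            intro j _
            rcases hQ1i0 j with h | h
            · rw [h]; simpa using hpos
            · exact h
          have hμ0 : μ i0 = rowDegNat Q i0 := rfl
          omega
    obtain ⟨E, E', Q', h1, h2, h3, h4⟩ := ih Q1 (by omega)
    refine ⟨T' * E, E' * T, Q', ?_, ?_, ?_, h4⟩
    · rw [Matrix.mul_assoc, ← Matrix.mul_assoc E, h1, Matrix.one_mul, hT'T]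
    · rw [Matrix.mul_assoc, ← Matrix.mul_assoc T, hTT', Matrix.one_mul, h2]
    · rw [Matrix.mul_assoc, ← h3, hQ1def, ← Matrix.mul_assoc, hT'T, Matrix.one_mul]

set_option synthInstance.maxHeartbeats 1000000 in
lemma aux_li_fractionRing {n : ℕ} {ι : Type*} {b : ι → (Fin n → RatFunc F)}
    (h : LinearIndependent F[X] b) : LinearIndependent (RatFunc F) b :=
  (LinearIndependent.iff_fractionRing F[X] (RatFunc F)).mp h

end Auxiliary
/-- The set of m×n polynomial matrices of degree at most d and normal rank at most r equals
the set of products L R with matching column/row degree sums bounded by d. -/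
theorem rank_deficient_set_eq_factorized_set
    {F : Type*} [Field F] {m n r d : ℕ}
    (hm : 2 ≤ m) (hn : 2 ≤ n) (hd : 1 ≤ d) (hr0 : 0 < r) (hrm : r < m) (hrn : r < n) :
    {P : Matrix (Fin m) (Fin n) F[X] | matDeg P ≤ (d : WithBot ℕ) ∧ normalRank P ≤ r} =
    {P : Matrix (Fin m) (Fin n) F[X] |
      ∃ (L : Matrix (Fin m) (Fin r) F[X]) (R : Matrix (Fin r) (Fin n) F[X]),
        P = L * R ∧ ∀ i : Fin r,
          colDeg L i ≤ (d : WithBot ℕ) ∧ rowDeg R i ≤ (d : WithBot ℕ) ∧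
          colDeg L i + rowDeg R i ≤ (d : WithBot ℕ)} := by
  classical
  apply Set.eq_of_subset_of_subset
  · -- hard direction: factorization
    rintro P ⟨hdeg, hrank⟩
    obtain ⟨E, E', Q, hEE', hE'E, hPQ, hred⟩ := aux_exists_redRows (mes P + 1) P (by omega)
    set s := Finset.univ.filter fun i => Q i ≠ 0 with hsdef
    set k := s.card with hkdef
    set e := s.orderIsoOfFin rfl with hedef
    set f : Fin k → Fin m := fun i => ((e i : {x // x ∈ s}) : Fin m) with hfdef
    have hfs : ∀ i, f i ∈ s := fun i => (e i).2
    have hQf : ∀ i : Fin k, Q (f i) ≠ 0 := fun i => (Finset.mem_filter.mp (hfs i)).2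
    have hsQ : ∀ b : Fin m, b ∉ s → Q b = 0 := by
      intro b hb
      by_contra h
      exact hb (Finset.mem_filter.mpr ⟨Finset.mem_univ b, h⟩)
    -- key degree bound from the predictable degree property
    have hkey : ∀ (a b : Fin m), E a b ≠ 0 → Q b ≠ 0 →
        (E a b).natDegree + rowDegNat Q b ≤ d := by
      intro a b hEab hQb
      set v : Fin m → F[X] := fun x => if Q x ≠ 0 then E a x else 0 with hvdef
      have hv : ∀ x, v x ≠ 0 → Q x ≠ 0 := by
        intro x hx
        by_contra h0
        simp [hvdef, h0] at hx
      have hvb : v b ≠ 0 := by simp [hvdef, hQb, hEab]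
      obtain ⟨j, hj0, hjle⟩ := aux_predDeg hred v hv hvb
      have hsum : ∑ x, v x * Q x j = P a j := by
        rw [hPQ, Matrix.mul_apply]
        apply Finset.sum_congr rfl
        intro x _
        by_cases hx : Q x = 0
        · rw [congrFun hx j]
          simp [hvdef, hx]
        · simp [hvdef, hx]
      rw [hsum] at hj0 hjle
      have hPd : (P a j).natDegree ≤ d :=
        Polynomial.natDegree_le_iff_degree_le.mpr (aux_degree_entry_le hdeg a j)
      have hvb' : v b = E a b := by simp [hvdef, hQb]
      rw [hvb'] at hjle
      omega
    -- every column of E is nonzero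
    have hcol : ∀ b : Fin m, ∃ a, E a b ≠ 0 := by
      intro b
      by_contra hall
      push_neg at hall
      have h0 : (E' * E) b b = 0 := by
        rw [Matrix.mul_apply]
        apply Finset.sum_eq_zero
        intro x _
        rw [hall x, mul_zero]
      rw [hE'E, Matrix.one_apply_eq] at h0
      exact one_ne_zero h0
    -- rank bound: k ≤ r
    have hcard : k ≤ r := by
      have hQEP : Q = E' * P := by
        rw [hPQ, ← Matrix.mul_assoc, hE'E, Matrix.one_mul]
      set Q0 : Matrix (Fin k) (Fin n) F[X] := Q.submatrix f id with hQ0def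
      have hindepP : LinearIndependent F[X] (toRat Q0) := by
        refine Fintype.linearIndependent_iff.mpr ?_
        intro g hg i
        by_contra hgi
        set v : Fin m → F[X] := fun a => if h : a ∈ s then g (e.symm ⟨a, h⟩) else 0 with hvdef
        have hv : ∀ x, v x ≠ 0 → Q x ≠ 0 := by
          intro x hx
          by_contra h0
          have hxs : x ∉ s := fun hmem => (Finset.mem_filter.mp hmem).2 h0
          simp [hvdef, hxs] at hx
        have hvf : ∀ i : Fin k, v (f i) = g i := by
          intro i
          rw [hvdef]
          simp only [hfs i, dif_pos]
          congr 1
          have he' : (⟨f i, hfs i⟩ : {x // x ∈ s}) = e i := Subtype.ext rfl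
          rw [he', OrderIso.symm_apply_apply]
        have hvsum : ∀ j, ∑ x, v x * Q x j = 0 := by
          intro j
          have h1 : ∑ x, v x * Q x j = ∑ x ∈ s, v x * Q x j := by
            symm
            apply Finset.sum_subset (Finset.subset_univ s)
            intro x _ hx
            rw [hvdef]
            simp [hx]
          have h2 : ∑ x ∈ s, v x * Q x j = ∑ i : Fin k, v (f i) * Q (f i) j := by
            rw [← Finset.sum_coe_sort s (fun x => v x * Q x j)]
            exact (Equiv.sum_comp e.toEquiv
              (fun x : {x // x ∈ s} => v (x : Fin m) * Q (x : Fin m) j)).symm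
          have h3 : ∑ i : Fin k, v (f i) * Q (f i) j = ∑ i : Fin k, g i * Q (f i) j :=
            Finset.sum_congr rfl fun i _ => by rw [hvf i]
          have h4 : (algebraMap F[X] (RatFunc F)) (∑ i : Fin k, g i * Q (f i) j) = 0 := by
            rw [map_sum]
            have h5 := congrFun hg j
            rw [Finset.sum_apply] at h5
            simp only [Pi.zero_apply] at h5
            rw [← h5]
            apply Finset.sum_congr rfl
            intro i _
            rw [_root_.map_mul, Pi.smul_apply, Algebra.smul_def]
            rfl
          have h6 : ∑ i : Fin k, g i * Q (f i) j = 0 := by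
            apply RatFunc.algebraMap_injective F
            rw [h4, map_zero]
          rw [h1, h2, h3, h6]
        obtain ⟨j, hj0, _⟩ := aux_predDeg hred v hv (show v (f i) ≠ 0 by rw [hvf i]; exact hgi)
        exact hj0 (hvsum j)
      have hindep : LinearIndependent (RatFunc F) (toRat Q0) :=
        aux_li_fractionRing hindepP
      have h1 : (toRat Q0).rank = k := by
          have := hindep.rank_matrix; rw [Fintype.card_fin] at this; exact this
      have h2 : (toRat Q0).rank ≤ (toRat Q).rank := by
        rw [Matrix.rank_eq_finrank_span_row, Matrix.rank_eq_finrank_span_row]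
        haveI := FiniteDimensional.span_of_finite (RatFunc F) (Set.finite_range (toRat Q))
        apply Submodule.finrank_mono
        apply Submodule.span_mono
        rintro x ⟨i, rfl⟩
        exact ⟨f i, rfl⟩
      have h3 : (toRat Q).rank ≤ (toRat P).rank := by
        have hmap : toRat Q = toRat E' * toRat P := by
          rw [hQEP]
          exact Matrix.map_mul
        rw [hmap]
        exact Matrix.rank_mul_le_right _ _
      have h4 : (toRat P).rank ≤ r := hrank
      omega
    -- the factorization
    set L : Matrix (Fin m) (Fin r) F[X] :=
      Matrix.of fun a i => if h : (i : ℕ) < k then E a (f ⟨i, h⟩) else 0 with hLdef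
    set R : Matrix (Fin r) (Fin n) F[X] :=
      Matrix.of fun i j => if h : (i : ℕ) < k then Q (f ⟨i, h⟩) j else 0 with hRdef
    have hLpos : ∀ a (i : Fin r) (h : (i : ℕ) < k), L a i = E a (f ⟨(i : ℕ), h⟩) :=
      fun a i h => dif_pos h
    have hLneg : ∀ a (i : Fin r), ¬ ((i : ℕ) < k) → L a i = 0 := fun a i h => dif_neg h
    have hRpos : ∀ (i : Fin r) j (h : (i : ℕ) < k), R i j = Q (f ⟨(i : ℕ), h⟩) j :=
      fun i j h => dif_pos h
    have hRneg : ∀ (i : Fin r) j, ¬ ((i : ℕ) < k) → R i j = 0 := fun i j h => dif_neg h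
    have hmem : ∀ i : Fin r, i ∈ Finset.univ.map (Fin.castLEEmb hcard) ↔ (i : ℕ) < k := by
      intro i
      simp only [Finset.mem_map, Finset.mem_univ, true_and, Fin.castLEEmb,
        Function.Embedding.coeFn_mk]
      constructor
      · rintro ⟨a, rfl⟩
        exact a.2
      · intro h
        exact ⟨⟨(i : ℕ), h⟩, by apply Fin.ext; simp⟩
    refine ⟨L, R, ?_, ?_⟩
    · apply Matrix.ext
      intro a j
      rw [Matrix.mul_apply]
      calc P a j = ∑ x, E a x * Q x j := by rw [hPQ, Matrix.mul_apply]
        _ = ∑ x ∈ s, E a x * Q x j := by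
            symm
            apply Finset.sum_subset (Finset.subset_univ s)
            intro x _ hx
            rw [congrFun (hsQ x hx) j, Pi.zero_apply, mul_zero]
        _ = ∑ i : Fin k, E a (f i) * Q (f i) j := by
            rw [← Finset.sum_coe_sort s (fun x => E a x * Q x j)]
            exact (Equiv.sum_comp e.toEquiv
              (fun x : {x // x ∈ s} => E a (x : Fin m) * Q (x : Fin m) j)).symm
        _ = ∑ i ∈ Finset.univ.map (Fin.castLEEmb hcard), L a i * R i j := by
            rw [Finset.sum_map]
            apply Finset.sum_congr rfl
            intro i _
            have hi : ((Fin.castLEEmb hcard i : Fin r) : ℕ) < k := by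
              simpa using i.2
            rw [hLpos _ _ hi, hRpos _ _ hi]
            congr 2 <;> apply congrArg <;> apply Fin.ext <;> simp
        _ = ∑ i : Fin r, L a i * R i j := by
            apply Finset.sum_subset (Finset.subset_univ _)
            intro i _ hi
            rw [hLneg a i (fun h => hi ((hmem i).mpr h)), zero_mul]
    · intro i
      by_cases h : (i : ℕ) < k
      · set b := f ⟨(i : ℕ), h⟩ with hbdef
        have hQb : Q b ≠ 0 := hQf _
        set μb := rowDegNat Q b with hμbdef
        have hμd : μb ≤ d := by
          obtain ⟨a, ha⟩ := hcol b
          have := hkey a b ha hQb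
          omega
        have hrowR : rowDeg R i ≤ (μb : WithBot ℕ) := by
          apply Finset.sup_le
          intro j _
          rw [hRpos i j h]
          refine le_trans (Polynomial.degree_le_natDegree) ?_
          have : (Q b j).natDegree ≤ μb :=
            Finset.le_sup (f := fun j => (Q b j).natDegree) (Finset.mem_univ j)
          exact_mod_cast this
        have hcolL : colDeg L i ≤ ((d - μb : ℕ) : WithBot ℕ) := by
          apply Finset.sup_le
          intro a _
          rw [hLpos a i h]
          by_cases hz : E a b = 0
          · rw [hz]
            simp
          · have h2 := hkey a b hz hQb
            refine le_trans (Polynomial.degree_le_natDegree) ?_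
            have : (E a b).natDegree ≤ d - μb := by omega
            exact_mod_cast this
        refine ⟨?_, ?_, ?_⟩
        · exact hcolL.trans (by exact_mod_cast Nat.sub_le d μb)
        · exact hrowR.trans (by exact_mod_cast hμd)
        · calc colDeg L i + rowDeg R i ≤ ((d - μb : ℕ) : WithBot ℕ) + (μb : WithBot ℕ) :=
              add_le_add hcolL hrowR
            _ = ((d - μb + μb : ℕ) : WithBot ℕ) := by push_cast; ring
            _ = (d : WithBot ℕ) := by rw [Nat.sub_add_cancel hμd]
      · have hcolbot : colDeg L i = ⊥ := by
          apply le_antisymm _ bot_le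
          apply Finset.sup_le
          intro a _
          rw [hLneg a i h]
          simp
        have hrowbot : rowDeg R i = ⊥ := by
          apply le_antisymm _ bot_le
          apply Finset.sup_le
          intro j _
          rw [hRneg i j h]
          simp
        refine ⟨?_, ?_, ?_⟩
        · rw [hcolbot]; exact bot_le
        · rw [hrowbot]; exact bot_le
        · rw [hcolbot, WithBot.bot_add]; exact bot_le
  · -- easy direction
    rintro P ⟨L, R, rfl, hLR⟩
    constructor
    · show Finset.univ.sup (fun i => Finset.univ.sup fun j => ((L * R) i j).degree) ≤ _
      apply Finset.sup_le
      intro a _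
      apply Finset.sup_le
      intro j _
      rw [Matrix.mul_apply]
      refine le_trans (Polynomial.degree_sum_le _ _) ?_
      apply Finset.sup_le
      intro i _
      calc (L a i * R i j).degree = (L a i).degree + (R i j).degree := Polynomial.degree_mul
        _ ≤ colDeg L i + rowDeg R i :=
            add_le_add (Finset.le_sup (f := fun a => (L a i).degree) (Finset.mem_univ a))
              (Finset.le_sup (f := fun j => (R i j).degree) (Finset.mem_univ j))
        _ ≤ (d : WithBot ℕ) := (hLR i).2.2
    · show (toRat (L * R)).rank ≤ r
      have hmap : toRat (L * R) = toRat L * toRat R := Matrix.map_mul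
      rw [hmap]
      exact le_trans (Matrix.rank_mul_le_left _ _) (Matrix.rank_le_width _)
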